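/- Let E be a Polish space, F a separable metric space, X a random element in E and T : E → F Borel measurable. Suppose there exist a measurable space G, random elements Y in G and Z in F defined on a common probability space such that (P2) Y and Z are independent, and a measurable map Ψ : G × F → E such that (P3) T(Ψ(Y,Z)) = Z almost surely and (P4) Ψ(Y,Z) has the same law as X. Then the map p defined by p(A,z) := P(Ψ(Y,z) ∈ A), for Borel A ⊆ E and z ∈ F, is a regular conditional probability of X given T(X). -/

import Mathlib

open MeasureTheory Filter Topology BoundedContinuousFunction ProbabilityTheory

/-- A regular conditional probability of `X` given `ξ`:
(R1) each `p z` is a probability measure, (R2) `z ↦ p z A` is measurable,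
(R3) the disintegration identity holds. -/
structure IsRCP {Ω E F : Type*} [MeasurableSpace Ω] [MeasurableSpace E] [MeasurableSpace F]
    (P : Measure Ω) (X : Ω → E) (ξ : Ω → F) (p : F → Measure E) : Prop where
  isProb : ∀ z : F, IsProbabilityMeasure (p z)
  meas : ∀ A : Set E, MeasurableSet A → Measurable fun z => p z A
  disint : ∀ (A : Set E) (B : Set F), MeasurableSet A → MeasurableSet B →
    P {ω | X ω ∈ A ∧ ξ ω ∈ B} = ∫⁻ z in B, p z A ∂(P.map ξ)

/-- If `X` splits as `Ψ(Y,Z)` with `Y ⟂ Z`, `T(Ψ(Y,Z)) = Z` a.s. and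
`Ψ(Y,Z) ~ X`, then `p(A,z) := P(Ψ(Y,z) ∈ A)` is a regular conditional probability of `X`
given `T(X)`. -/
theorem stmt1 {Ω E F G : Type*} [MeasurableSpace Ω]
    [TopologicalSpace E] [PolishSpace E] [MeasurableSpace E] [BorelSpace E]
    [MetricSpace F] [TopologicalSpace.SeparableSpace F] [MeasurableSpace F] [BorelSpace F]
    [MeasurableSpace G]
    (P : Measure Ω) [IsProbabilityMeasure P]
    (X : Ω → E) (hX : Measurable X) (T : E → F) (hT : Measurable T)
    (Y : Ω → G) (Z : Ω → F) (hY : Measurable Y) (hZ : Measurable Z)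
    (hindep : IndepFun Y Z P)
    (Ψ : G × F → E) (hΨ : Measurable Ψ)
    (hTZ : ∀ᵐ ω ∂P, T (Ψ (Y ω, Z ω)) = Z ω)
    (hlaw : P.map (fun ω => Ψ (Y ω, Z ω)) = P.map X) :
    IsRCP P X (T ∘ X) (fun z => P.map fun ω => Ψ (Y ω, z)) := by
  have hYZ : Measurable fun ω => Ψ (Y ω, Z ω) := hΨ.comp (hY.prodMk hZ)
  set μ := P.map Y with hμ
  set ν := P.map Z with hν
  have hμp : IsProbabilityMeasure μ := Measure.isProbabilityMeasure_map hY.aemeasurable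
  have hνp : IsProbabilityMeasure ν := Measure.isProbabilityMeasure_map hZ.aemeasurable
  have hmapTX : P.map (T ∘ X) = ν := by
    have h1 : P.map (T ∘ X) = P.map (fun ω => T (Ψ (Y ω, Z ω))) := by
      rw [← Measure.map_map hT hX, ← hlaw, Measure.map_map hT hYZ]
      rfl
    rw [h1, Measure.map_congr hTZ]
  have hΨz : ∀ z : F, Measurable fun y : G => Ψ (y, z) :=
    fun z => hΨ.comp (measurable_id.prodMk measurable_const)
  have hpz : ∀ (z : F) (A : Set E), MeasurableSet A →
      (P.map fun ω => Ψ (Y ω, z)) A = μ {y | Ψ (y, z) ∈ A} := by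
    intro z A hA
    rw [Measure.map_apply (f := fun ω => Ψ (Y ω, z)) ((hΨz z).comp hY) hA, hμ,
      Measure.map_apply hY (s := {y | Ψ (y, z) ∈ A}) ((hΨz z) hA)]
    rfl
  refine ⟨?_, ?_, ?_⟩
  · intro z
    exact Measure.isProbabilityMeasure_map ((hΨz z).comp hY).aemeasurable
  · intro A hA
    have hs : MeasurableSet {q : F × G | Ψ (q.2, q.1) ∈ A} :=
      (hΨ.comp (measurable_snd.prodMk measurable_fst)) hA
    have h := measurable_measure_prodMk_left (ν := μ) hs
    simp only [hpz _ A hA]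
    exact h
  · intro A B hA hB
    have hprod : P.map (fun ω => (Z ω, Y ω)) = ν.prod μ :=
      (indepFun_iff_map_prod_eq_prod_map_map hZ.aemeasurable hY.aemeasurable).mp hindep.symm
    have hsAB : MeasurableSet {q : F × G | Ψ (q.2, q.1) ∈ A ∧ q.1 ∈ B} :=
      ((hΨ.comp (measurable_snd.prodMk measurable_fst)) hA).inter (measurable_fst hB)
    have e1 : P {ω | X ω ∈ A ∧ (T ∘ X) ω ∈ B} = (P.map X) (A ∩ T ⁻¹' B) := by
      rw [Measure.map_apply hX (hA.inter (hT hB))]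
      rfl
    have e2 : (P.map X) (A ∩ T ⁻¹' B) = P {ω | Ψ (Y ω, Z ω) ∈ A ∧ Z ω ∈ B} := by
      rw [← hlaw, Measure.map_apply hYZ (hA.inter (hT hB))]
      refine measure_congr (Filter.eventuallyEq_set.mpr ?_)
      filter_upwards [hTZ] with ω h
      simp [Set.mem_preimage, h]
    have e3 : P {ω | Ψ (Y ω, Z ω) ∈ A ∧ Z ω ∈ B}
        = (ν.prod μ) {q : F × G | Ψ (q.2, q.1) ∈ A ∧ q.1 ∈ B} := by
      rw [← hprod, Measure.map_apply (hZ.prodMk hY) hsAB]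
      rfl
    have e4 : (ν.prod μ) {q : F × G | Ψ (q.2, q.1) ∈ A ∧ q.1 ∈ B}
        = ∫⁻ z in B, μ {y | Ψ (y, z) ∈ A} ∂ν := by
      rw [Measure.prod_apply hsAB, ← lintegral_indicator hB]
      congr 1
      funext z
      by_cases hzB : z ∈ B
      · simp only [Set.indicator_of_mem hzB]
        congr 1
        ext y
        simp [hzB]
      · simp only [Set.indicator_of_notMem hzB]
        convert measure_empty (μ := μ)
        ext y
        simp [hzB]
    rw [e1, e2, e3, e4, hmapTX]
    refine setLIntegral_congr_fun hB (fun z _ => ?_)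
    exact (hpz z A hA).symm
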